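/- Fix a number field L with ring of integers O_L. For every ε > 0 there are constants (depending only on L and ε) such that for every positive integer n and all real X ≥ 2: (i) Σ_{𝔞 : n | N(𝔞), N(𝔞) ≤ X} 1/N(𝔞) = O( X·log(X)·n^{ε}/n ), the sum over nonzero ideals 𝔞 of O_L with n dividing N(𝔞) and N(𝔞) ≤ X; and (ii) Σ_{(𝔞,𝔟) : n | N(𝔞𝔟), N(𝔞𝔟) ≤ X} 1/N(𝔞𝔟) = O( X·log²(X)·n^{ε}/n ), the sum over pairs of nonzero ideals 𝔞, 𝔟 of O_L with n dividing N(𝔞·𝔟) and N(𝔞·𝔟) ≤ X. -/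

import Mathlib

open scoped BigOperators Classical
open NumberField

set_option maxHeartbeats 1000000

private lemma aux_poly_le_exp (k : ℕ) : ∃ M : ℝ, 1 ≤ M ∧ ∀ c : ℕ, ((c : ℝ) + 1) ^ k ≤ M * 2 ^ c := by
  have h := tendsto_pow_const_div_const_pow_of_one_lt k (by norm_num : (1:ℝ) < 2)
  have h2 := h.eventually_le_const (by norm_num : (0:ℝ) < 1)
  rw [Filter.eventually_atTop] at h2
  obtain ⟨N, hN⟩ := h2
  have hM1 : (1:ℝ) ≤ ((N : ℝ) + 1) ^ k + 2 := by
    have : (0:ℝ) ≤ ((N : ℝ) + 1) ^ k := by positivity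
    linarith
  refine ⟨((N : ℝ) + 1) ^ k + 2, hM1, fun c => ?_⟩
  rcases le_or_gt N (c + 1) with hc | hc
  · have := hN (c + 1) hc
    have h2pos : (0:ℝ) < 2 ^ (c+1) := by positivity
    rw [div_le_one h2pos] at this
    have hkey : ((c:ℝ) + 1) ^ k ≤ 2 ^ (c + 1) := by push_cast at this ⊢; linarith
    calc ((c:ℝ) + 1) ^ k ≤ 2 ^ (c+1) := hkey
      _ = 2 * 2 ^ c := by ring
      _ ≤ (((N : ℝ) + 1) ^ k + 2) * 2 ^ c := by
          have h1 : (0:ℝ) ≤ ((N : ℝ) + 1) ^ k := by positivity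
          have h3 : (0:ℝ) < 2 ^ c := by positivity
          nlinarith
  · have hcN : (c : ℝ) + 1 ≤ (N : ℝ) + 1 := by
      have : (c : ℝ) + 1 ≤ (N : ℝ) := by
        have : c + 1 ≤ N := hc.le
        exact_mod_cast this
      linarith
    have h3 : (1:ℝ) ≤ 2 ^ c := one_le_pow₀ (by norm_num)
    calc ((c:ℝ) + 1) ^ k ≤ ((N : ℝ) + 1) ^ k := by
          apply pow_le_pow_left₀ (by positivity) hcN
      _ ≤ (((N : ℝ) + 1) ^ k + 2) * 1 := by linarith
      _ ≤ (((N : ℝ) + 1) ^ k + 2) * 2 ^ c := by nlinarith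

private lemma pow_le_aux {d : ℕ} (hd : 0 < d) {x C y : ℝ} (hC : 1 ≤ C) (hy : 1 ≤ y)
    (h : x ^ d ≤ C * y) : x ≤ C * y := by
  rcases le_or_gt x 1 with h1 | h1
  · calc x ≤ 1 := h1
      _ ≤ C * y := one_le_mul_of_one_le_of_one_le hC hy
  · calc x ≤ x ^ d := le_self_pow₀ h1.le hd.ne'
      _ ≤ C * y := h

private lemma pow_le_aux' {d : ℕ} (hd : 0 < d) {x C y : ℝ} (hC : 1 ≤ C) (hy : 1 ≤ y)
    (h : x ^ d ≤ C * y ^ d) : x ≤ C * y := by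
  by_contra hcon
  push_neg at hcon
  have hCy : (0:ℝ) ≤ C * y := by positivity
  have h1 : (C * y) ^ d < x ^ d := pow_lt_pow_left₀ hcon hCy hd.ne'
  have h2 : C * y ^ d ≤ (C * y) ^ d := by
    rw [mul_pow]
    have : C ≤ C ^ d := le_self_pow₀ hC hd.ne'
    have hyd : (0:ℝ) < y ^ d := by positivity
    nlinarith
  linarith

open UniqueFactorizationMonoid in
private lemma key_div_bound (L : Type*) [Field L] [NumberField L] :
    ∃ C : ℝ, 1 ≤ C ∧ ∀ J : Ideal (𝓞 L), J ≠ ⊥ →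
      ∀ s : Finset (Ideal (𝓞 L)), (∀ I ∈ s, I ≠ ⊥ ∧ I ∣ J) →
        ((s.card : ℝ)) ^ (2 * Module.finrank ℤ (𝓞 L)) ≤ C * (Ideal.absNorm J : ℝ) := by
  classical
  set d := Module.finrank ℤ (𝓞 L) with hd_def
  obtain ⟨M, hM1, hM⟩ := aux_poly_le_exp (2 * d)
  set B : ℕ := 2 ^ (2 * d) with hB
  set SF := (Ideal.finite_setOf_absNorm_le (S := 𝓞 L) B).toFinset with hSF
  refine ⟨M ^ SF.card, one_le_pow₀ hM1, fun J hJ s hs => ?_⟩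
  set t := normalizedFactors J with ht
  -- Step A : cardinality bound via injection into Finset.pi
  have hcard : s.card ≤ ∏ P ∈ t.toFinset, (t.count P + 1) := by
    have hinj := Finset.card_le_card_of_injOn (s := s)
      (f := fun I => fun (P : Ideal (𝓞 L)) (_ : P ∈ t.toFinset) => (normalizedFactors I).count P)
      (t := t.toFinset.pi fun P => Finset.range (t.count P + 1)) ?_ ?_
    · calc s.card ≤ (t.toFinset.pi fun P => Finset.range (t.count P + 1)).card := hinj
        _ = ∏ P ∈ t.toFinset, (t.count P + 1) := by
            rw [Finset.card_pi]; exact Finset.prod_congr rfl fun P _ => Finset.card_range _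
    · intro I hI
      obtain ⟨hIne, hIdvd⟩ := hs I hI
      have hle : normalizedFactors I ≤ t :=
        (dvd_iff_normalizedFactors_le_normalizedFactors hIne hJ).mp hIdvd
      rw [Finset.mem_coe, Finset.mem_pi]
      intro P _
      rw [Finset.mem_range, Nat.lt_succ_iff]
      exact Multiset.le_iff_count.mp hle P
    · intro I1 hI1 I2 hI2 heq
      simp only [Finset.mem_coe] at hI1 hI2
      obtain ⟨h1ne, h1dvd⟩ := hs I1 hI1
      obtain ⟨h2ne, h2dvd⟩ := hs I2 hI2
      have hle1 : normalizedFactors I1 ≤ t :=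
        (dvd_iff_normalizedFactors_le_normalizedFactors h1ne hJ).mp h1dvd
      have hle2 : normalizedFactors I2 ≤ t :=
        (dvd_iff_normalizedFactors_le_normalizedFactors h2ne hJ).mp h2dvd
      have hfac : normalizedFactors I1 = normalizedFactors I2 := by
        ext P
        by_cases hP : P ∈ t.toFinset
        · exact congrFun (congrFun heq P) hP
        · have h0 : t.count P = 0 :=
            Multiset.count_eq_zero.mpr (fun h => hP (Multiset.mem_toFinset.mpr h))
          have := Multiset.le_iff_count.mp hle1 P
          have := Multiset.le_iff_count.mp hle2 P
          omega
      calc I1 = (normalizedFactors I1).prod := (associated_iff_eq.mp (prod_normalizedFactors h1ne)).symm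
        _ = (normalizedFactors I2).prod := by rw [hfac]
        _ = I2 := associated_iff_eq.mp (prod_normalizedFactors h2ne)
  -- norm as product over factors
  have habs : Ideal.absNorm J = ∏ P ∈ t.toFinset, Ideal.absNorm P ^ t.count P := by
    have h1 : t.prod = J := associated_iff_eq.mp (prod_normalizedFactors hJ)
    conv_lhs => rw [← h1]
    rw [map_multiset_prod, Finset.prod_multiset_map_count]
  -- every factor is a prime ideal of norm at least 2
  have hprime : ∀ P ∈ t.toFinset, 2 ≤ Ideal.absNorm P := by
    intro P hP
    have hpr : Prime P := prime_of_normalized_factor P (Multiset.mem_toFinset.mp hP)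
    have h0 : Ideal.absNorm P ≠ 0 := by
      rw [Ne, Ideal.absNorm_eq_zero_iff, ← Submodule.zero_eq_bot]
      exact hpr.ne_zero
    have h1 : Ideal.absNorm P ≠ 1 := by
      rw [Ne, Ideal.absNorm_eq_one_iff]
      intro htop
      exact hpr.not_unit (by rw [Ideal.isUnit_iff]; exact htop)
    omega
  have hstep : ∀ P ∈ t.toFinset, ((t.count P + 1 : ℕ) : ℝ) ^ (2 * d) ≤
      (if Ideal.absNorm P < B then M else 1) * (Ideal.absNorm P : ℝ) ^ t.count P := by
    intro P hP
    have h2 := hprime P hP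
    by_cases hsmall : Ideal.absNorm P < B
    · rw [if_pos hsmall]
      have hc := hM (t.count P)
      have h2R : (2:ℝ) ≤ (Ideal.absNorm P : ℝ) := by exact_mod_cast h2
      have hpow : (2:ℝ) ^ t.count P ≤ (Ideal.absNorm P : ℝ) ^ t.count P :=
        pow_le_pow_left₀ (by norm_num) h2R _
      calc ((t.count P + 1 : ℕ) : ℝ) ^ (2 * d) ≤ M * 2 ^ t.count P := by push_cast; exact hc
        _ ≤ M * (Ideal.absNorm P : ℝ) ^ t.count P := by
            apply mul_le_mul_of_nonneg_left hpow (by linarith)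
    · rw [if_neg hsmall, one_mul]
      push_neg at hsmall
      have hnat : (t.count P + 1) ^ (2 * d) ≤ (Ideal.absNorm P) ^ t.count P := by
        calc (t.count P + 1) ^ (2 * d) ≤ (2 ^ t.count P) ^ (2 * d) :=
              Nat.pow_le_pow_left (Nat.lt_two_pow_self) _
          _ = B ^ t.count P := by rw [hB, ← pow_mul, ← pow_mul, Nat.mul_comm]
          _ ≤ (Ideal.absNorm P) ^ t.count P := Nat.pow_le_pow_left hsmall _
      exact_mod_cast hnat
  have hwprod : ∏ P ∈ t.toFinset, (if Ideal.absNorm P < B then M else (1:ℝ)) ≤ M ^ SF.card := by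
    rw [Finset.prod_ite, Finset.prod_const, Finset.prod_const, one_pow, mul_one]
    apply pow_le_pow_right₀ hM1
    apply Finset.card_le_card
    intro P hP
    rw [Finset.mem_filter] at hP
    rw [hSF, Set.Finite.mem_toFinset, Set.mem_setOf_eq]
    exact hP.2.le
  have step1 : ((s.card : ℝ)) ^ (2 * d)
      ≤ ((∏ P ∈ t.toFinset, (t.count P + 1) : ℕ) : ℝ) ^ (2 * d) := by
    apply pow_le_pow_left₀ (by positivity) (by exact_mod_cast hcard)
  have step2 : ((∏ P ∈ t.toFinset, (t.count P + 1) : ℕ) : ℝ) ^ (2 * d)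
      = ∏ P ∈ t.toFinset, ((t.count P + 1 : ℕ) : ℝ) ^ (2 * d) := by
    rw [Nat.cast_prod, ← Finset.prod_pow]
  have step3 : ∏ P ∈ t.toFinset, ((t.count P + 1 : ℕ) : ℝ) ^ (2 * d)
      ≤ ∏ P ∈ t.toFinset,
          ((if Ideal.absNorm P < B then M else 1) * (Ideal.absNorm P : ℝ) ^ t.count P) := by
    apply Finset.prod_le_prod (fun P hP => by positivity) hstep
  have step4 : ∏ P ∈ t.toFinset,
          ((if Ideal.absNorm P < B then M else 1) * (Ideal.absNorm P : ℝ) ^ t.count P)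
      = (∏ P ∈ t.toFinset, (if Ideal.absNorm P < B then M else (1:ℝ))) *
          ∏ P ∈ t.toFinset, (Ideal.absNorm P : ℝ) ^ t.count P := Finset.prod_mul_distrib
  have step5 : (∏ P ∈ t.toFinset, (if Ideal.absNorm P < B then M else (1:ℝ))) *
          (∏ P ∈ t.toFinset, (Ideal.absNorm P : ℝ) ^ t.count P)
      ≤ M ^ SF.card * (Ideal.absNorm J : ℝ) := by
    have hnn : (0:ℝ) ≤ ∏ P ∈ t.toFinset, (Ideal.absNorm P : ℝ) ^ t.count P :=
      Finset.prod_nonneg fun P _ => pow_nonneg (Nat.cast_nonneg _) _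
    have heq2 : (Ideal.absNorm J : ℝ) = ∏ P ∈ t.toFinset, (Ideal.absNorm P : ℝ) ^ t.count P := by
      rw [habs]; push_cast; ring
    rw [heq2]
    exact mul_le_mul_of_nonneg_right hwprod hnn
  linarith [step1, step2 ▸ step1, step3, step4 ▸ step3, step5]

private lemma master_bound (L : Type*) [Field L] [NumberField L] :
    ∃ C : ℝ, 1 ≤ C ∧
      (∀ m : ℕ, m ≠ 0 → ∀ s : Finset (Ideal (𝓞 L)), (∀ a ∈ s, Ideal.absNorm a = m) →
        ((s.card : ℝ)) ^ 2 ≤ C * m) ∧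
      (∀ I : Ideal (𝓞 L), I ≠ ⊥ → ∀ s : Finset (Ideal (𝓞 L)), (∀ a ∈ s, a ≠ ⊥ ∧ a ∣ I) →
        ((s.card : ℝ)) ^ 2 ≤ C * (Ideal.absNorm I : ℝ)) := by
  classical
  obtain ⟨C, hC1, hkey⟩ := key_div_bound L
  have hd : 0 < Module.finrank ℤ (𝓞 L) := Module.finrank_pos
  refine ⟨C, hC1, ?_, ?_⟩
  · intro m hm s hs
    set J : Ideal (𝓞 L) := Ideal.span {(m : 𝓞 L)} with hJdef
    have hmne : ((m : ℕ) : 𝓞 L) ≠ 0 := Nat.cast_ne_zero.mpr hm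
    have hJ : J ≠ ⊥ := by
      rw [hJdef, Ne, Ideal.span_singleton_eq_bot]
      exact hmne
    have hnormJ : Ideal.absNorm J = m ^ Module.finrank ℤ (𝓞 L) := by
      rw [hJdef, Ideal.absNorm_span_singleton]
      have hcast : ((m : ℕ) : 𝓞 L) = algebraMap ℤ (𝓞 L) (m : ℤ) := by
        simp
      rw [hcast, Algebra.norm_algebraMap_of_basis (Module.Free.chooseBasis ℤ (𝓞 L)),
        ← Module.finrank_eq_card_chooseBasisIndex ℤ (𝓞 L), Int.natAbs_pow, Int.natAbs_natCast]
    have hs' : ∀ a ∈ s, a ≠ ⊥ ∧ a ∣ J := by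
      intro a ha
      have hna := hs a ha
      constructor
      · rw [Ne, ← Ideal.absNorm_eq_zero_iff, hna]; exact hm
      · rw [Ideal.dvd_iff_le, hJdef, ← hna]
        exact Ideal.span_singleton_absNorm_le a
    have h := hkey J hJ s hs'
    rw [hnormJ] at h
    have h' : (((s.card : ℝ)) ^ 2) ^ Module.finrank ℤ (𝓞 L) ≤ C * ((m : ℝ)) ^ Module.finrank ℤ (𝓞 L) := by
      rw [← pow_mul]
      push_cast at h ⊢
      convert h using 2
    have hm1 : (1 : ℝ) ≤ (m : ℝ) := by exact_mod_cast Nat.one_le_iff_ne_zero.mpr hm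
    exact pow_le_aux' hd hC1 hm1 h'
  · intro I hI s hs
    have h := hkey I hI s hs
    have hn1 : (1 : ℝ) ≤ (Ideal.absNorm I : ℝ) := by
      have : Ideal.absNorm I ≠ 0 := by rw [Ne, Ideal.absNorm_eq_zero_iff]; exact hI
      exact_mod_cast Nat.one_le_iff_ne_zero.mpr this
    have h' : (((s.card : ℝ)) ^ 2) ^ Module.finrank ℤ (𝓞 L) ≤ C * (Ideal.absNorm I : ℝ) := by
      rw [← pow_mul]; exact h
    exact pow_le_aux hd hC1 hn1 h'



/-- For a fixed number field `L` and every `ε > 0` there are constants depending only on `L`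
and `ε` such that for every positive integer `n` and all real `X ≥ 2`:
(i) `Σ_{n | N(𝔞), N(𝔞) ≤ X} 1/N(𝔞) = O(X·log X·n^ε/n)`, and
(ii) `Σ_{n | N(𝔞𝔟), N(𝔞𝔟) ≤ X} 1/N(𝔞𝔟) = O(X·log² X·n^ε/n)`, the sums over nonzero
ideals (resp. pairs of nonzero ideals) of `𝓞 L`. -/
theorem norm_multiple_reciprocal_sums (L : Type*) [Field L] [NumberField L] (ε : ℝ)
    (hε : 0 < ε) :
    ∃ c₁ c₂ : ℝ, 0 < c₁ ∧ 0 < c₂ ∧ ∀ n : ℕ, 0 < n → ∀ X : ℝ, 2 ≤ X →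
      (∑ᶠ I : Ideal (𝓞 L),
          if I ≠ ⊥ ∧ n ∣ Ideal.absNorm I ∧ (Ideal.absNorm I : ℝ) ≤ X then
            ((Ideal.absNorm I : ℝ))⁻¹ else 0)
        ≤ c₁ * X * Real.log X * (n : ℝ) ^ ε / n ∧
      (∑ᶠ p : Ideal (𝓞 L) × Ideal (𝓞 L),
          if p.1 ≠ ⊥ ∧ p.2 ≠ ⊥ ∧ n ∣ Ideal.absNorm (p.1 * p.2) ∧
              (Ideal.absNorm (p.1 * p.2) : ℝ) ≤ X then
            ((Ideal.absNorm (p.1 * p.2) : ℝ))⁻¹ else 0)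
        ≤ c₂ * X * Real.log X ^ 2 * (n : ℝ) ^ ε / n := by
  classical
  obtain ⟨C, hC1, hcount, hdiv⟩ := master_bound L
  have hC0 : (0:ℝ) < C := lt_of_lt_of_le one_pos hC1
  have hlog2 : 0 < Real.log 2 := Real.log_pos (by norm_num)
  refine ⟨C / Real.log 2, C / (Real.log 2)^2, by positivity, by positivity, fun n hn X hX => ?_⟩
  have hX0 : (0:ℝ) ≤ X := by linarith
  have hXlog : Real.log 2 ≤ Real.log X := Real.log_le_log (by norm_num) hX
  have hnR : (1:ℝ) ≤ (n:ℝ) := by exact_mod_cast hn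
  have hn0R : (0:ℝ) < (n:ℝ) := by linarith
  have hnpow : (1:ℝ) ≤ (n:ℝ) ^ ε := by
    have := Real.rpow_le_rpow_of_exponent_le hnR hε.le (y := 0)
    rwa [Real.rpow_zero] at this
  set N₀ := ⌊X⌋₊ with hN₀
  have hN₀X : (N₀ : ℝ) ≤ X := Nat.floor_le hX0
  set U := (Ideal.finite_setOf_absNorm_le (S := 𝓞 L) N₀).toFinset with hU
  have hmemU : ∀ I : Ideal (𝓞 L), I ∈ U ↔ Ideal.absNorm I ≤ N₀ := by
    intro I
    rw [hU, Set.Finite.mem_toFinset, Set.mem_setOf_eq]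
  -- counting multiples of n
  have hmultiples : ∀ P : ℕ, (((Finset.range P).filter
        (fun m => m ≠ 0 ∧ n ∣ m ∧ (m:ℝ) ≤ X)).card : ℝ) ≤ X / n := by
    intro P
    have hsub : (Finset.range P).filter (fun m => m ≠ 0 ∧ n ∣ m ∧ (m:ℝ) ≤ X) ⊆
        (Finset.Ioc 0 N₀).filter (n ∣ ·) := by
      intro m hm
      rw [Finset.mem_filter] at hm ⊢
      obtain ⟨-, hm0, hmn, hmX⟩ := hm
      exact ⟨Finset.mem_Ioc.mpr ⟨Nat.pos_of_ne_zero hm0, Nat.le_floor hmX⟩, hmn⟩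
    have hle := Finset.card_le_card hsub
    rw [Nat.Ioc_filter_dvd_card_eq_div] at hle
    calc ((((Finset.range P).filter (fun m => m ≠ 0 ∧ n ∣ m ∧ (m:ℝ) ≤ X)).card) : ℝ)
        ≤ ((N₀ / n : ℕ) : ℝ) := by exact_mod_cast hle
      _ ≤ (N₀ : ℝ) / n := Nat.cast_div_le
      _ ≤ X / n := by gcongr
  -- the generic final comparison
  have hfinal1 : C * (X / n) ≤ C / Real.log 2 * X * Real.log X * (n:ℝ) ^ ε / n := by
    have heq : C / Real.log 2 * X * Real.log X * (n:ℝ) ^ ε / n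
        = (C * (X / n)) * (Real.log X / Real.log 2 * (n:ℝ) ^ ε) := by
      field_simp
    rw [heq]
    apply le_mul_of_one_le_right (by positivity)
    have h1 : (1:ℝ) ≤ Real.log X / Real.log 2 := (one_le_div hlog2).mpr hXlog
    nlinarith
  have hfinal2 : C * (X / n) ≤ C / (Real.log 2)^2 * X * (Real.log X)^2 * (n:ℝ) ^ ε / n := by
    have heq : C / (Real.log 2)^2 * X * (Real.log X)^2 * (n:ℝ) ^ ε / n
        = (C * (X / n)) * ((Real.log X)^2 / (Real.log 2)^2 * (n:ℝ) ^ ε) := by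
      field_simp
    rw [heq]
    apply le_mul_of_one_le_right (by positivity)
    have h1 : (1:ℝ) ≤ (Real.log X)^2 / (Real.log 2)^2 := by
      rw [one_le_div (by positivity)]
      nlinarith
    nlinarith
  constructor
  · -- Part (i)
    set g : Ideal (𝓞 L) → ℝ := fun I =>
      if I ≠ ⊥ ∧ n ∣ Ideal.absNorm I ∧ (Ideal.absNorm I : ℝ) ≤ X then
        ((Ideal.absNorm I : ℝ))⁻¹ else 0 with hg
    have hsupp : Function.support g ⊆ ↑U := by
      intro I hI
      rw [Function.mem_support, hg] at hI
      simp only [ne_eq, ite_eq_right_iff, not_forall] at hI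
      obtain ⟨⟨h1, h2, h3⟩, -⟩ := hI
      rw [Finset.mem_coe, hmemU]
      exact Nat.le_floor h3
    rw [show (∑ᶠ I : Ideal (𝓞 L),
          if I ≠ ⊥ ∧ n ∣ Ideal.absNorm I ∧ (Ideal.absNorm I : ℝ) ≤ X then
            ((Ideal.absNorm I : ℝ))⁻¹ else 0) = ∑ᶠ I, g I from rfl,
      finsum_eq_sum_of_support_subset _ hsupp]
    have hmaps : ∀ I ∈ U, Ideal.absNorm I ∈ Finset.range (N₀ + 1) := by
      intro I hI
      rw [Finset.mem_range, Nat.lt_succ_iff]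
      exact (hmemU I).mp hI
    rw [← Finset.sum_fiberwise_of_maps_to hmaps g]
    have hinner : ∀ m ∈ Finset.range (N₀ + 1),
        (∑ I ∈ U.filter (fun I => Ideal.absNorm I = m), g I)
          ≤ (if m ≠ 0 ∧ n ∣ m ∧ (m:ℝ) ≤ X then C else 0) := by
      intro m _
      by_cases hm : m ≠ 0 ∧ n ∣ m ∧ (m:ℝ) ≤ X
      · rw [if_pos hm]
        obtain ⟨hm0, hmn, hmX⟩ := hm
        have hmR : (1:ℝ) ≤ (m:ℝ) := by exact_mod_cast Nat.one_le_iff_ne_zero.mpr hm0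
        have hb : ∀ I ∈ U.filter (fun I => Ideal.absNorm I = m), g I ≤ (m:ℝ)⁻¹ := by
          intro I hI
          rw [Finset.mem_filter] at hI
          simp only [hg]
          split
          · rw [hI.2]
          · positivity
        have hcardle : ((U.filter (fun I => Ideal.absNorm I = m)).card : ℝ) ≤ C * m := by
          have h2 := hcount m hm0 (U.filter (fun I => Ideal.absNorm I = m))
            (fun a ha => (Finset.mem_filter.mp ha).2)
          set k : ℝ := ((U.filter (fun I => Ideal.absNorm I = m)).card : ℝ) with hk
          have h3 : (0:ℝ) ≤ k := Nat.cast_nonneg _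
          rcases le_or_gt k 1 with h4 | h4
          · nlinarith
          · nlinarith
        calc (∑ I ∈ U.filter (fun I => Ideal.absNorm I = m), g I)
            ≤ ∑ _I ∈ U.filter (fun I => Ideal.absNorm I = m), (m:ℝ)⁻¹ := Finset.sum_le_sum hb
          _ = ((U.filter (fun I => Ideal.absNorm I = m)).card : ℝ) * (m:ℝ)⁻¹ := by
              rw [Finset.sum_const, nsmul_eq_mul]
          _ ≤ (C * m) * (m:ℝ)⁻¹ := by
              apply mul_le_mul_of_nonneg_right hcardle (by positivity)
          _ = C := by field_simp
      · rw [if_neg hm]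
        apply le_of_eq
        apply Finset.sum_eq_zero
        intro I hI
        rw [Finset.mem_filter] at hI
        simp only [hg]
        rw [if_neg]
        rintro ⟨h1, h2, h3⟩
        apply hm
        rw [← hI.2]
        refine ⟨?_, h2, h3⟩
        rw [Ne, Ideal.absNorm_eq_zero_iff]
        exact h1
    calc (∑ m ∈ Finset.range (N₀ + 1), ∑ I ∈ U.filter (fun I => Ideal.absNorm I = m), g I)
        ≤ ∑ m ∈ Finset.range (N₀ + 1), (if m ≠ 0 ∧ n ∣ m ∧ (m:ℝ) ≤ X then C else 0) :=
          Finset.sum_le_sum hinner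
      _ = (((Finset.range (N₀ + 1)).filter (fun m => m ≠ 0 ∧ n ∣ m ∧ (m:ℝ) ≤ X)).card : ℝ) * C := by
          rw [← Finset.sum_filter, Finset.sum_const, nsmul_eq_mul]
      _ ≤ (X / n) * C := by
          apply mul_le_mul_of_nonneg_right (hmultiples _) hC0.le
      _ = C * (X / n) := mul_comm _ _
      _ ≤ C / Real.log 2 * X * Real.log X * (n:ℝ) ^ ε / n := hfinal1
  · -- Part (ii)
    set g2 : Ideal (𝓞 L) × Ideal (𝓞 L) → ℝ := fun p =>
      if p.1 ≠ ⊥ ∧ p.2 ≠ ⊥ ∧ n ∣ Ideal.absNorm (p.1 * p.2) ∧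
          (Ideal.absNorm (p.1 * p.2) : ℝ) ≤ X then
        ((Ideal.absNorm (p.1 * p.2) : ℝ))⁻¹ else 0 with hg2
    have hsupp2 : Function.support g2 ⊆ ↑(U ×ˢ U) := by
      intro p hp
      rw [Function.mem_support, hg2] at hp
      simp only [ne_eq, ite_eq_right_iff, not_forall] at hp
      obtain ⟨⟨h1, h2, h3, h4⟩, -⟩ := hp
      have hmul : Ideal.absNorm (p.1 * p.2) = Ideal.absNorm p.1 * Ideal.absNorm p.2 :=
        map_mul Ideal.absNorm p.1 p.2
      have hle : Ideal.absNorm p.1 * Ideal.absNorm p.2 ≤ N₀ := by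
        rw [← hmul]; exact Nat.le_floor h4
      have h1' : 0 < Ideal.absNorm p.1 := by
        rw [Nat.pos_iff_ne_zero, Ne, Ideal.absNorm_eq_zero_iff]; exact h1
      have h2' : 0 < Ideal.absNorm p.2 := by
        rw [Nat.pos_iff_ne_zero, Ne, Ideal.absNorm_eq_zero_iff]; exact h2
      rw [Finset.mem_coe, Finset.mem_product, hmemU, hmemU]
      constructor
      · exact le_trans (Nat.le_mul_of_pos_right _ h2') hle
      · exact le_trans (Nat.le_mul_of_pos_left _ h1') hle
    rw [show (∑ᶠ p : Ideal (𝓞 L) × Ideal (𝓞 L),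
          if p.1 ≠ ⊥ ∧ p.2 ≠ ⊥ ∧ n ∣ Ideal.absNorm (p.1 * p.2) ∧
              (Ideal.absNorm (p.1 * p.2) : ℝ) ≤ X then
            ((Ideal.absNorm (p.1 * p.2) : ℝ))⁻¹ else 0) = ∑ᶠ p, g2 p from rfl,
      finsum_eq_sum_of_support_subset _ hsupp2]
    have hmaps2 : ∀ p ∈ U ×ˢ U, Ideal.absNorm (p.1 * p.2) ∈ Finset.range (N₀ * N₀ + 1) := by
      intro p hp
      rw [Finset.mem_product] at hp
      rw [Finset.mem_range, Nat.lt_succ_iff, map_mul]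
      exact Nat.mul_le_mul ((hmemU _).mp hp.1) ((hmemU _).mp hp.2)
    rw [← Finset.sum_fiberwise_of_maps_to hmaps2 g2]
    have hinner2 : ∀ m ∈ Finset.range (N₀ * N₀ + 1),
        (∑ p ∈ (U ×ˢ U).filter (fun p => Ideal.absNorm (p.1 * p.2) = m), g2 p)
          ≤ (if m ≠ 0 ∧ n ∣ m ∧ (m:ℝ) ≤ X then C else 0) := by
      intro m _
      set fib := (U ×ˢ U).filter (fun p => Ideal.absNorm (p.1 * p.2) = m) with hfib
      by_cases hm : m ≠ 0 ∧ n ∣ m ∧ (m:ℝ) ≤ X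
      · rw [if_pos hm]
        obtain ⟨hm0, hmn, hmX⟩ := hm
        have hmR : (1:ℝ) ≤ (m:ℝ) := by exact_mod_cast Nat.one_le_iff_ne_zero.mpr hm0
        set fib' := fib.filter (fun p => p.1 ≠ ⊥ ∧ p.2 ≠ ⊥) with hfib'
        have hsum_eq : (∑ p ∈ fib', g2 p) = ∑ p ∈ fib, g2 p := by
          apply Finset.sum_filter_of_ne
          intro p hp hne
          simp only [hg2] at hne
          by_contra hcon
          apply hne
          rw [if_neg]
          rintro ⟨ha, hb, -⟩
          exact hcon ⟨ha, hb⟩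
        rw [← hsum_eq]
        have hb : ∀ p ∈ fib', g2 p ≤ (m:ℝ)⁻¹ := by
          intro p hp
          rw [hfib'] at hp
          rw [Finset.mem_filter] at hp
          have hpm : Ideal.absNorm (p.1 * p.2) = m := (Finset.mem_filter.mp hp.1).2
          simp only [hg2]
          split
          · rw [hpm]
          · positivity
        -- bound the cardinality of fib'
        set Sm := (Ideal.finite_setOf_absNorm_eq (S := 𝓞 L) m).toFinset with hSm
        have hSmmem : ∀ a : Ideal (𝓞 L), a ∈ Sm ↔ Ideal.absNorm a = m := by
          intro a
          rw [hSm, Set.Finite.mem_toFinset, Set.mem_setOf_eq]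
        have hSmcard : ((Sm.card : ℝ)) ≤ Real.sqrt (C * m) := by
          rw [Real.le_sqrt (Nat.cast_nonneg _) (by positivity)]
          exact hcount m hm0 Sm (fun a ha => (hSmmem a).mp ha)
        have hmapsfib : ∀ p ∈ fib', p.1 * p.2 ∈ Sm := by
          intro p hp
          rw [hfib', Finset.mem_filter] at hp
          rw [hSmmem]
          exact (Finset.mem_filter.mp hp.1).2
        have hsubcard : ∀ I ∈ Sm,
            (((fib'.filter (fun p => p.1 * p.2 = I)).card : ℝ)) ≤ Real.sqrt (C * m) := by
          intro I hI
          have hIm : Ideal.absNorm I = m := (hSmmem I).mp hI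
          have hIne : I ≠ ⊥ := by
            rw [Ne, ← Ideal.absNorm_eq_zero_iff, hIm]; exact hm0
          set sub := fib'.filter (fun p => p.1 * p.2 = I) with hsub
          have hinjOn : Set.InjOn (Prod.fst : Ideal (𝓞 L) × Ideal (𝓞 L) → Ideal (𝓞 L)) ↑sub := by
            intro p hp q hq hfst
            rw [Finset.mem_coe, hsub, Finset.mem_filter] at hp hq
            have hp1 : p.1 ≠ ⊥ := ((Finset.mem_filter.mp hp.1).2).1
            have hpI : p.1 * p.2 = I := hp.2
            have hqI : q.1 * q.2 = I := hq.2
            have hp1q1 : p.1 = q.1 := hfst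
            have h0 : p.1 ≠ 0 := by rw [Submodule.zero_eq_bot]; exact hp1
            have hsnd : p.2 = q.2 := by
              apply mul_left_cancel₀ h0
              rw [hpI, hp1q1, hqI]
            exact Prod.ext hp1q1 hsnd
          set s' := sub.image Prod.fst with hs'
          have hcardeq : s'.card = sub.card := Finset.card_image_of_injOn hinjOn
          have hs'div : ∀ a ∈ s', a ≠ ⊥ ∧ a ∣ I := by
            intro a ha
            rw [hs', Finset.mem_image] at ha
            obtain ⟨p, hp, rfl⟩ := ha
            rw [hsub, Finset.mem_filter] at hp
            have hp1 : p.1 ≠ ⊥ := ((Finset.mem_filter.mp hp.1).2).1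
            refine ⟨hp1, ?_⟩
            rw [← hp.2]
            exact dvd_mul_right p.1 p.2
          have := hdiv I hIne s' hs'div
          rw [hIm] at this
          rw [← hcardeq]
          rw [Real.le_sqrt (Nat.cast_nonneg _) (by positivity)]
          exact this
        have hfibcard : ((fib'.card : ℝ)) ≤ C * m := by
          have hcards : fib'.card = ∑ I ∈ Sm, (fib'.filter (fun p => p.1 * p.2 = I)).card :=
            Finset.card_eq_sum_card_fiberwise hmapsfib
          calc ((fib'.card : ℝ)) = ∑ I ∈ Sm, (((fib'.filter (fun p => p.1 * p.2 = I)).card : ℝ)) := by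
                rw [hcards]; push_cast; rfl
            _ ≤ ∑ _I ∈ Sm, Real.sqrt (C * m) := Finset.sum_le_sum hsubcard
            _ = (Sm.card : ℝ) * Real.sqrt (C * m) := by rw [Finset.sum_const, nsmul_eq_mul]
            _ ≤ Real.sqrt (C * m) * Real.sqrt (C * m) := by
                apply mul_le_mul_of_nonneg_right hSmcard (Real.sqrt_nonneg _)
            _ = C * m := Real.mul_self_sqrt (by positivity)
        calc (∑ p ∈ fib', g2 p) ≤ ∑ _p ∈ fib', (m:ℝ)⁻¹ := Finset.sum_le_sum hb
          _ = ((fib'.card : ℝ)) * (m:ℝ)⁻¹ := by rw [Finset.sum_const, nsmul_eq_mul]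
          _ ≤ (C * m) * (m:ℝ)⁻¹ := mul_le_mul_of_nonneg_right hfibcard (by positivity)
          _ = C := by field_simp
      · rw [if_neg hm]
        apply le_of_eq
        apply Finset.sum_eq_zero
        intro p hp
        rw [hfib, Finset.mem_filter] at hp
        simp only [hg2]
        rw [if_neg]
        rintro ⟨h1, h2, h3, h4⟩
        apply hm
        rw [← hp.2]
        refine ⟨?_, h3, h4⟩
        rw [Ne, Ideal.absNorm_eq_zero_iff, Ideal.mul_eq_bot]
        rintro (h | h)
        · exact h1 h
        · exact h2 h
    calc (∑ m ∈ Finset.range (N₀ * N₀ + 1),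
          ∑ p ∈ (U ×ˢ U).filter (fun p => Ideal.absNorm (p.1 * p.2) = m), g2 p)
        ≤ ∑ m ∈ Finset.range (N₀ * N₀ + 1), (if m ≠ 0 ∧ n ∣ m ∧ (m:ℝ) ≤ X then C else 0) :=
          Finset.sum_le_sum hinner2
      _ = (((Finset.range (N₀ * N₀ + 1)).filter
            (fun m => m ≠ 0 ∧ n ∣ m ∧ (m:ℝ) ≤ X)).card : ℝ) * C := by
          rw [← Finset.sum_filter, Finset.sum_const, nsmul_eq_mul]
      _ ≤ (X / n) * C := mul_le_mul_of_nonneg_right (hmultiples _) hC0.le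
      _ = C * (X / n) := mul_comm _ _
      _ ≤ C / (Real.log 2)^2 * X * (Real.log X)^2 * (n:ℝ) ^ ε / n := hfinal2
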